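/- Forced drop: In the abstract linear language λ̂_lin, if Γ ⊩ ae, the variable x occurs at least once in the multiset Γ, and x ∉ fv(erase(ae)), then ae contains a subterm of the form drop Γ′ ae′ with x ∈ Γ′. -/
import Mathlib


/-!
Formalization of the abstract linear language λ̂_lin from "Type Classes for
Lightweight Substructural Types" (Clamp), §4.1.
-/

namespace LamLin

/-- Unannotated terms: variables, abstractions, multiplicative pairs `⊗`, and
additive choices `&`. -/
inductive ETm : Type
| var : String → ETm
| lam : String → ETm → ETm
| tens : ETm → ETm → ETm
| amp : ETm → ETm → ETm
deriving DecidableEq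

/-- Annotated terms: additionally `dup Γ ae` and `drop Γ ae`, where `Γ` is a
multiset of variables. -/
inductive ATm : Type
| var : String → ATm
| lam : String → ATm → ATm
| tens : ATm → ATm → ATm
| amp : ATm → ATm → ATm
| dup : Multiset String → ATm → ATm
| drop : Multiset String → ATm → ATm

/-- Free variables of an unannotated term. -/
def ETm.fv : ETm → Finset String
| .var x => {x}
| .lam x e => e.fv \ {x}
| .tens a b => a.fv ∪ b.fv
| .amp a b => a.fv ∪ b.fv

/-- Free variables of an annotated term; for `dup Γ ae` and `drop Γ ae` this
includes the variables of `Γ` together with the free variables of `ae`. -/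
def ATm.fv : ATm → Finset String
| .var x => {x}
| .lam x a => a.fv \ {x}
| .tens a b => a.fv ∪ b.fv
| .amp a b => a.fv ∪ b.fv
| .dup Γ a => Γ.toFinset ∪ a.fv
| .drop Γ a => Γ.toFinset ∪ a.fv

/-- Well-formedness `Γ ⊩ ae` of an annotated term in a multiset context. -/
inductive WF : Multiset String → ATm → Prop
| var : WF {x} (.var x)
| lam : x ∉ Γ → WF (Γ + {x}) a → WF Γ (.lam x a)
| tens : WF Γ₁ a → WF Γ₂ b → WF (Γ₁ + Γ₂) (.tens a b)
| amp : WF Γ a → WF Γ b → WF Γ (.amp a b)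
| dup : WF (Γ₁ + Γ₂ + Γ₂) a → WF (Γ₁ + Γ₂) (.dup Γ₂ a)
| drop : WF Γ₁ a → WF (Γ₁ + Γ₂) (.drop Γ₂ a)

/-- The dup/drop inference (elaboration) algorithm. -/
def infer : ETm → ATm
| .var x => .var x
| .lam x e =>
    if x ∈ e.fv then .lam x (infer e) else .lam x (.drop {x} (infer e))
| .tens a b => .dup (a.fv ∩ b.fv).val (.tens (infer a) (infer b))
| .amp a b =>
    .amp (.drop (b.fv \ a.fv).val (infer a)) (.drop (a.fv \ b.fv).val (infer b))

/-- Erasure of dup/drop annotations. -/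
def erase : ATm → ETm
| .var x => .var x
| .lam x a => .lam x (erase a)
| .tens a b => .tens (erase a) (erase b)
| .amp a b => .amp (erase a) (erase b)
| .dup _ a => erase a
| .drop _ a => erase a

/-- `Subterm s t`: `s` occurs as a subterm of the annotated term `t`. -/
inductive Subterm : ATm → ATm → Prop
| refl : Subterm a a
| lam : Subterm s a → Subterm s (.lam x a)
| tensL : Subterm s a → Subterm s (.tens a b)
| tensR : Subterm s b → Subterm s (.tens a b)
| ampL : Subterm s a → Subterm s (.amp a b)
| ampR : Subterm s b → Subterm s (.amp a b)
| dup : Subterm s a → Subterm s (.dup Γ a)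
| drop : Subterm s a → Subterm s (.drop Γ a)

/-- `WFSub Γ ae Γₛ aeₛ`: there is a derivation of `Γ ⊩ ae` containing the
judgment `Γₛ ⊩ aeₛ` as a subderivation. -/
inductive WFSub : Multiset String → ATm → Multiset String → ATm → Prop
| refl : WF Γ a → WFSub Γ a Γ a
| lam : x ∉ Γ → WFSub (Γ + {x}) a Γs as → WFSub Γ (.lam x a) Γs as
| tensL : WFSub Γ₁ a Γs as → WF Γ₂ b → WFSub (Γ₁ + Γ₂) (.tens a b) Γs as
| tensR : WF Γ₁ a → WFSub Γ₂ b Γs as → WFSub (Γ₁ + Γ₂) (.tens a b) Γs as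
| ampL : WFSub Γ a Γs as → WF Γ b → WFSub Γ (.amp a b) Γs as
| ampR : WF Γ a → WFSub Γ b Γs as → WFSub Γ (.amp a b) Γs as
| dup : WFSub (Γ₁ + Γ₂ + Γ₂) a Γs as → WFSub (Γ₁ + Γ₂) (.dup Γ₂ a) Γs as
| drop : WFSub Γ₁ a Γs as → WFSub (Γ₁ + Γ₂) (.drop Γ₂ a) Γs as

end LamLin

namespace LamLin

/-- **Forced drop** (Lemma 9 of the Clamp paper).
If `Γ ⊩ ae`, `Γ(x) ≥ 1`, and `x ∉ fv(erase(ae))`, then `ae` contains a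
subterm `drop Γ′ ae′` with `x ∈ Γ′`. -/
theorem forced_drop {Γ : Multiset String} {ae : ATm} {x : String}
    (h : WF Γ ae) (hx : 1 ≤ Γ.count x) (hfv : x ∉ (erase ae).fv) :
    ∃ (Γ' : Multiset String) (ae' : ATm),
      Subterm (.drop Γ' ae') ae ∧ x ∈ Γ' := by
  induction h with
  | @var y =>
      exfalso
      have : x = y := by simpa using Multiset.count_pos.mp (lt_of_lt_of_le one_pos hx)
      exact hfv (by simp [erase, ETm.fv, this])
  | @lam Γ' y a hy hwf ih =>
      have hxy : x ≠ y := fun h => hy (h ▸ Multiset.count_pos.mp (lt_of_lt_of_le one_pos hx))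
      have hx' : 1 ≤ Multiset.count x (Γ' + {y}) := by
        simp only [Multiset.count_add]; omega
      have hfv' : x ∉ (erase a).fv := by
        intro h; exact hfv (by simp [erase, ETm.fv, h, hxy])
      obtain ⟨G, e, hs, hm⟩ := ih hx' hfv'
      exact ⟨G, e, .lam hs, hm⟩
  | @tens Γ₁ a Γ₂ b h1 h2 ih1 ih2 =>
      simp only [erase, ETm.fv, Finset.mem_union, not_or] at hfv
      rw [Multiset.count_add] at hx
      by_cases h : 1 ≤ Multiset.count x Γ₁
      · obtain ⟨G, e, hs, hm⟩ := ih1 h hfv.1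
        exact ⟨G, e, .tensL hs, hm⟩
      · have : 1 ≤ Multiset.count x Γ₂ := by omega
        obtain ⟨G, e, hs, hm⟩ := ih2 this hfv.2
        exact ⟨G, e, .tensR hs, hm⟩
  | @amp Γ' a b h1 h2 ih1 ih2 =>
      simp only [erase, ETm.fv, Finset.mem_union, not_or] at hfv
      obtain ⟨G, e, hs, hm⟩ := ih1 hx hfv.1
      exact ⟨G, e, .ampL hs, hm⟩
  | @dup Γ₁ Γ₂ a hwf ih =>
      have hx' : 1 ≤ Multiset.count x (Γ₁ + Γ₂ + Γ₂) := by
        rw [Multiset.count_add] at hx ⊢; rw [Multiset.count_add]; omega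
      obtain ⟨G, e, hs, hm⟩ := ih hx' hfv
      exact ⟨G, e, .dup hs, hm⟩
  | @drop Γ₁ a Γ₂ hwf ih =>
      by_cases hmem : x ∈ Γ₂
      · exact ⟨Γ₂, a, .refl, hmem⟩
      · have : Multiset.count x Γ₂ = 0 := Multiset.count_eq_zero.mpr hmem
        have hx' : 1 ≤ Multiset.count x Γ₁ := by
          rw [Multiset.count_add] at hx; omega
        obtain ⟨G, e, hs, hm⟩ := ih hx' hfv
        exact ⟨G, e, .drop hs, hm⟩

end LamLin
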